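/- Let (Ω, 𝔉, P) be a probability space, let X and W be measurable spaces, and let (h_{(x,w)})_{(x,w)∈X×W} be a centered Gaussian process on Ω with product covariance function E[h_{(x,w)}·h_{(x′,w′)}] = k_X(x, x′)·k_W(w, w′), with each h_{(x,w)} ∈ L²(Ω, P) and, for each x, w ↦ h_{(x,w)} ∈ L²(Ω, P) strongly measurable. Let P_W be a probability measure on W and (ν_{x,z}) a family of finite measures on W, with respect to each of which w ↦ h_{(x,w)} is Bochner integrable in L²(Ω, P). Set f_{x′} = ∫ h_{(x′,w′)} dP_W(w′) and g_{(x,z)} = ∫ h_{(x,w)} dν_{x,z}(w) (Bochner integrals in L²(Ω, P)). Then the combined process (f, g), indexed by the disjoint union X ⊔ (X × Z), is a centered Gaussian process, and its cross-covariance satisfies E[f_{x′}·g_{(x,z)}] = k_X(x, x′) · ∬ k_W(w′, w) dP_W(w′) dν_{x,z}(w). -/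

import Mathlib

open MeasureTheory ProbabilityTheory Filter Set
open scoped NNReal ENNReal

section AuxHelpers

variable {Ω : Type*} [MeasurableSpace Ω] {P : Measure Ω}

lemma lp_coeFn_sum {ι : Type*} (s : Finset ι) (u : ι → Lp ℝ 2 P) :
    ⇑(∑ i ∈ s, u i) =ᵐ[P] fun ω => ∑ i ∈ s, u i ω := by
  classical
  induction s using Finset.induction_on with
  | empty => simp only [Finset.sum_empty]; exact Lp.coeFn_zero ℝ 2 P
  | @insert a s hnot ih =>
    rw [Finset.sum_insert hnot]
    filter_upwards [Lp.coeFn_add (u a) (∑ i ∈ s, u i), ih] with ω h1 h2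
    rw [h1, Pi.add_apply, h2, Finset.sum_insert hnot]

lemma lp_coeFn_comb {n : ℕ} (c : Fin n → ℝ) (u : Fin n → Lp ℝ 2 P) :
    ⇑(∑ i, c i • u i) =ᵐ[P] fun ω => ∑ i, c i * u i ω := by
  have hsm : ∀ᵐ ω ∂P, ∀ i, (c i • u i) ω = c i * u i ω :=
    ae_all_iff.2 fun i => (Lp.coeFn_smul (c i) (u i)).mono fun ω hω => by
      simpa [smul_eq_mul] using hω
  filter_upwards [lp_coeFn_sum Finset.univ (fun i => c i • u i), hsm] with ω h1 h2
  rw [h1]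
  exact Finset.sum_congr rfl fun i _ => h2 i

lemma integral_mem_closure_submodule {β : Type*} [MeasurableSpace β] (μ : Measure β)
    (u : β → Lp ℝ 2 P) (hu : Integrable u μ) (S : Submodule ℝ (Lp ℝ 2 P))
    (hrange : ∀ b, u b ∈ S) :
    (∫ b, u b ∂μ) ∈ closure (S : Set (Lp ℝ 2 P)) := by
  rw [← Submodule.topologicalClosure_coe, ← Submodule.orthogonal_orthogonal_eq_closure]
  rw [SetLike.mem_coe, Submodule.mem_orthogonal]
  intro z hz
  rw [← integral_inner hu z]
  have hzero : ∀ b, (inner ℝ z (u b)) = 0 := fun b => by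
    rw [real_inner_comm]; exact hz _ (hrange b)
  simp [hzero]

lemma gauss_m2_integrable : Integrable (fun x : ℝ => x ^ 2) (gaussianReal 0 1) := by
  rw [gaussianReal_of_var_ne_zero 0 one_ne_zero]
  rw [integrable_withDensity_iff (measurable_gaussianPDF 0 1)
    (Eventually.of_forall fun x => ENNReal.ofReal_lt_top)]
  have : Integrable (fun x : ℝ => x ^ ((2:ℕ):ℝ) * Real.exp (-(2 * (1:ℝ))⁻¹ * x ^ 2)) :=
    integrable_rpow_mul_exp_neg_mul_sq (by norm_num) (by norm_num)
  simp_rw [Real.rpow_natCast] at this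
  have := this.const_mul ((Real.sqrt (2 * Real.pi * 1))⁻¹)
  apply this.congr
  refine Eventually.of_forall fun x => ?_
  simp only
  rw [gaussianPDF, ENNReal.toReal_ofReal (gaussianPDFReal_nonneg _ _ _), gaussianPDFReal]
  push_cast
  ring_nf

lemma gauss_m2_pos : 0 < ∫ x : ℝ, x ^ 2 ∂(gaussianReal 0 1) := by
  rw [integral_pos_iff_support_of_nonneg (fun x => sq_nonneg x) gauss_m2_integrable]
  have hs : Function.support (fun x : ℝ => x ^ 2) = {(0:ℝ)}ᶜ := by
    ext x; simp [Function.mem_support, pow_eq_zero_iff]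
  rw [hs]
  have h0 : gaussianReal 0 1 {(0:ℝ)} = 0 :=
    gaussianReal_absolutelyContinuous 0 one_ne_zero
      (measure_singleton (μ := (volume : Measure ℝ)) 0)
  have := measure_compl (μ := gaussianReal 0 1) (measurableSet_singleton (0:ℝ)) (by simp [h0])
  rw [h0, measure_univ] at this
  simp [this]

lemma gauss_scale (w : ℝ≥0) :
    (gaussianReal 0 1).map (fun x => Real.sqrt w * x) = gaussianReal 0 w := by
  have := gaussianReal_map_const_mul (μ := 0) (v := 1) (Real.sqrt w)
  simp only [mul_zero] at this
  convert this using 2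
  ext
  simp [Real.sq_sqrt w.coe_nonneg]

lemma gauss_m2 (w : ℝ≥0) :
    ∫ x : ℝ, x ^ 2 ∂(gaussianReal 0 w) = w * ∫ x : ℝ, x ^ 2 ∂(gaussianReal 0 1) := by
  rw [← gauss_scale w, integral_map (measurable_const_mul _).aemeasurable
    (continuous_pow 2).aestronglyMeasurable]
  simp_rw [mul_pow, Real.sq_sqrt w.coe_nonneg, integral_const_mul]

lemma limit_gaussian [IsProbabilityMeasure P] (Y : ℕ → Lp ℝ 2 P) (Ylim : Lp ℝ 2 P)
    (hY : Tendsto Y atTop (nhds Ylim))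
    (hG : ∀ n, ∃ v : ℝ≥0, P.map ⇑(Y n) = gaussianReal 0 v) :
    ∃ v : ℝ≥0, P.map ⇑Ylim = gaussianReal 0 v := by
  classical
  choose v hv using hG
  set m2 : ℝ := ∫ x : ℝ, x ^ 2 ∂(gaussianReal 0 1) with hm2def
  have hsq : ∀ n : ℕ, ∫ x : ℝ, x ^ 2 ∂(P.map ⇑(Y n)) = ∫ ω, (Y n ω) ^ 2 ∂P := fun n =>
    integral_map (Lp.aestronglyMeasurable (Y n)).aemeasurable
      (continuous_pow 2).aestronglyMeasurable
  have hinner : ∀ n : ℕ, ∫ ω, (Y n ω) ^ 2 ∂P = (inner ℝ (Y n) (Y n)) := by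
    intro n
    rw [L2.inner_def]
    refine integral_congr_ae (Eventually.of_forall fun ω => ?_)
    simp [RCLike.inner_apply, conj_trivial, sq]
  have hvn : ∀ n : ℕ, (v n : ℝ) * m2 = (inner ℝ (Y n) (Y n)) := by
    intro n
    rw [← hinner, ← hsq, hv n, gauss_m2]
  set Vr : ℝ := (inner ℝ Ylim Ylim) / m2 with hVrdef
  have hm2pos : 0 < m2 := gauss_m2_pos
  have hvtend : Tendsto (fun n => (v n : ℝ)) atTop (nhds Vr) := by
    have h1 : Tendsto (fun n => (inner ℝ (Y n) (Y n))) atTop (nhds (inner ℝ Ylim Ylim)) :=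
      (hY.inner hY)
    have h2 := h1.div_const m2
    refine h2.congr fun n => ?_
    rw [← hvn n, mul_div_assoc, div_self hm2pos.ne', mul_one]
  set vl : ℝ≥0 := Real.toNNReal Vr with hvldef
  have hVr_eq : (vl : ℝ) = Vr := by
    rw [hvldef, Real.coe_toNNReal]
    exact le_of_tendsto_of_tendsto' tendsto_const_nhds hvtend fun n => (v n).coe_nonneg
  have hvtend' : Tendsto v atTop (nhds vl) := by
    rw [← NNReal.tendsto_coe, hVr_eq]; exact hvtend
  have help : ∀ n, eLpNorm (⇑(Y n) - ⇑Ylim) 2 P = ENNReal.ofReal (dist (Y n) Ylim) := by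
    intro n
    rw [Lp.dist_def, ENNReal.ofReal_toReal]
    rw [← eLpNorm_congr_ae (Lp.coeFn_sub (Y n) Ylim)]
    exact Lp.eLpNorm_ne_top _
  have htim : TendstoInMeasure P (fun n => ⇑(Y n)) atTop ⇑Ylim := by
    refine tendstoInMeasure_of_tendsto_eLpNorm (two_ne_zero)
      (fun n => Lp.aestronglyMeasurable (Y n)) (Lp.aestronglyMeasurable Ylim) ?_
    simp_rw [help]
    have : Tendsto (fun n => dist (Y n) Ylim) atTop (nhds 0) :=
      tendsto_iff_dist_tendsto_zero.mp hY
    simpa using ENNReal.tendsto_ofReal this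
  have hmain : ∀ ψ : ℝ → ℝ, Continuous ψ → ∀ B : ℝ, (∀ x, |ψ x| ≤ B) →
      ∫ ω, ψ (Ylim ω) ∂P = ∫ x, ψ x ∂(gaussianReal 0 vl) := by
    intro ψ hψ B hB
    have ha : Tendsto (fun n => ∫ ω, ψ (Y n ω) ∂P) atTop (nhds (∫ ω, ψ (Ylim ω) ∂P)) := by
      refine tendsto_of_subseq_tendsto fun ns hns => ?_
      have htim' : TendstoInMeasure P (fun k => ⇑(Y (ns k))) atTop ⇑Ylim :=
        fun ε hε => (htim ε hε).comp hns
      obtain ⟨ms, -, hae⟩ := htim'.exists_seq_tendsto_ae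
      refine ⟨ms, ?_⟩
      refine tendsto_integral_of_dominated_convergence (fun _ => B)
        (fun k => hψ.comp_aestronglyMeasurable (Lp.aestronglyMeasurable _))
        (integrable_const B)
        (fun k => Eventually.of_forall fun ω => by
          simpa [Real.norm_eq_abs] using hB (Y (ns (ms k)) ω))
        (hae.mono fun ω hω => (hψ.tendsto _).comp hω)
    have hb : ∀ n, ∫ ω, ψ (Y n ω) ∂P = ∫ x, ψ (Real.sqrt (v n) * x) ∂(gaussianReal 0 1) := by
      intro n
      rw [← integral_map (Lp.aestronglyMeasurable (Y n)).aemeasurable hψ.aestronglyMeasurable,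
        hv n, ← gauss_scale (v n),
        integral_map (measurable_const_mul _).aemeasurable hψ.aestronglyMeasurable]
    have hc : Tendsto (fun n => ∫ x, ψ (Real.sqrt (v n) * x) ∂(gaussianReal 0 1)) atTop
        (nhds (∫ x, ψ (Real.sqrt vl * x) ∂(gaussianReal 0 1))) := by
      refine tendsto_integral_of_dominated_convergence (fun _ => B)
        (fun k => (hψ.comp (continuous_const.mul continuous_id)).aestronglyMeasurable)
        (integrable_const B)
        (fun k => Eventually.of_forall fun x => by
          simpa [Real.norm_eq_abs] using hB (Real.sqrt (v k) * x))
        (Eventually.of_forall fun x => ?_)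
      have hs : Tendsto (fun n => Real.sqrt (v n) * x) atTop (nhds (Real.sqrt vl * x)) := by
        refine Tendsto.mul_const x ?_
        exact (Real.continuous_sqrt.tendsto _).comp (NNReal.tendsto_coe.mpr hvtend')
      exact (hψ.tendsto _).comp hs
    have hd : ∫ x, ψ (Real.sqrt vl * x) ∂(gaussianReal 0 1) = ∫ x, ψ x ∂(gaussianReal 0 vl) := by
      rw [← gauss_scale vl,
        integral_map (measurable_const_mul _).aemeasurable hψ.aestronglyMeasurable]
    rw [← hd]
    refine tendsto_nhds_unique ?_ hc
    exact ha.congr hb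
  haveI : IsProbabilityMeasure (P.map ⇑Ylim) :=
    Measure.isProbabilityMeasure_map (Lp.aestronglyMeasurable Ylim).aemeasurable
  refine ⟨vl, ?_⟩
  refine ext_of_forall_lintegral_eq_of_IsFiniteMeasure fun φ => ?_
  have h1 : (∫⁻ x, φ x ∂(P.map ⇑Ylim)) ≠ ⊤ :=
    (BoundedContinuousFunction.lintegral_lt_top_of_nnreal _ φ).ne
  have h2 : (∫⁻ x, φ x ∂(gaussianReal 0 vl)) ≠ ⊤ :=
    (BoundedContinuousFunction.lintegral_lt_top_of_nnreal _ φ).ne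
  rw [← ENNReal.ofReal_toReal h1, ← ENNReal.ofReal_toReal h2]
  congr 1
  rw [BoundedContinuousFunction.toReal_lintegral_coe_eq_integral,
    BoundedContinuousFunction.toReal_lintegral_coe_eq_integral]
  set ψ : ℝ → ℝ := fun x => (φ x : ℝ) with hψdef
  have hψc : Continuous ψ := NNReal.continuous_coe.comp φ.continuous
  obtain ⟨C, hC⟩ := φ.bounded
  have hBnd : ∀ x, |ψ x| ≤ C + ψ 0 := by
    intro x
    rw [abs_of_nonneg (φ x).coe_nonneg]
    have := hC x 0
    rw [NNReal.dist_eq] at this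
    have h3 : ψ x - ψ 0 ≤ C := le_trans (le_abs_self _) this
    linarith
  have := hmain ψ hψc (C + ψ 0) hBnd
  rw [← this, integral_map (Lp.aestronglyMeasurable Ylim).aemeasurable hψc.aestronglyMeasurable]

end AuxHelpers

/-- A process `(f_t)_{t ∈ T}` on a measure space `(Ω, P)` is a centered Gaussian process
if every finite real linear combination `∑ i, c i * f (t i)` is a centered real Gaussian
random variable. -/
def IsCenteredGaussianProcess {Ω T : Type*} [MeasurableSpace Ω]
    (P : Measure Ω) (f : T → Ω → ℝ) : Prop :=
  ∀ (n : ℕ) (t : Fin n → T) (c : Fin n → ℝ), ∃ v : NNReal,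
    P.map (fun ω => ∑ i, c i * f (t i) ω) = gaussianReal 0 v

section MoreHelpers

variable {Ω : Type*} [MeasurableSpace Ω] {P : Measure Ω}

lemma span_gaussian {T : Type*} (h : T → Lp ℝ 2 P)
    (hGP : IsCenteredGaussianProcess P fun p => ⇑(h p)) :
    ∀ Y ∈ Submodule.span ℝ (Set.range h), ∃ v : NNReal, P.map ⇑Y = gaussianReal 0 v := by
  intro Y hY
  rw [Submodule.mem_span_set'] at hY
  obtain ⟨n, c, g, rfl⟩ := hY
  choose p hp using fun i => (g i).2
  obtain ⟨v, hv⟩ := hGP n p c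
  refine ⟨v, ?_⟩
  rw [← hv]
  apply Measure.map_congr
  filter_upwards [lp_coeFn_comb c (fun i => (g i : Lp ℝ 2 P))] with ω h1
  rw [h1]
  exact Finset.sum_congr rfl fun i _ => by rw [hp i]

end MoreHelpers

set_option synthInstance.maxHeartbeats 1000000 in
/-- Joint Gaussianity underlying the GPProxy construction. If `(h_{(x,w)})` is a centered
Gaussian process with product covariance `E[h_{(x,w)} h_{(x′,w′)}] = k_X(x,x′)·k_W(w,w′)`,
`f_{x′} = ∫ h_{(x′,w′)} dP_W(w′)` and `g_{(x,z)} = ∫ h_{(x,w)} dν_{x,z}(w)`, then the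
combined process `(f, g)` indexed by `X ⊔ (X × Z)` is a centered Gaussian process with
cross-covariance `E[f_{x′} g_{(x,z)}] = k_X(x,x′) · ∬ k_W(w′,w) dP_W(w′) dν_{x,z}(w)`. -/
theorem joint_gaussian_f_and_g_proxy
    {Ω : Type*} [MeasurableSpace Ω] (P : Measure Ω) [IsProbabilityMeasure P]
    {X W Z : Type*} [MeasurableSpace X] [MeasurableSpace W]
    (h : X × W → Lp ℝ 2 P)
    (hmeas : ∀ x, StronglyMeasurable (fun w => h (x, w)))
    (hGP : IsCenteredGaussianProcess P (fun p => ⇑(h p)))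
    (kX : X → X → ℝ) (kW : W → W → ℝ)
    (hcov : ∀ x x' w w', (∫ ω, h (x, w) ω * h (x', w') ω ∂P) = kX x x' * kW w w')
    (PW : Measure W) [IsProbabilityMeasure PW]
    (hintPW : ∀ x, Integrable (fun w => h (x, w)) PW)
    (ν : X × Z → Measure W) (hfin : ∀ p, IsFiniteMeasure (ν p))
    (hint : ∀ x z, Integrable (fun w => h (x, w)) (ν (x, z)))
    (f : X → Lp ℝ 2 P) (hf : ∀ x', f x' = ∫ w', h (x', w') ∂PW)
    (g : X × Z → Lp ℝ 2 P) (hg : ∀ x z, g (x, z) = ∫ w, h (x, w) ∂(ν (x, z))) :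
    IsCenteredGaussianProcess P (Sum.elim (fun x => ⇑(f x)) (fun p => ⇑(g p))) ∧
    ∀ x' x z, (∫ ω, f x' ω * g (x, z) ω ∂P)
      = kX x x' * ∫ w, (∫ w', kW w' w ∂PW) ∂(ν (x, z)) := by
  classical
  set S : Submodule ℝ (Lp ℝ 2 P) := Submodule.span ℝ (Set.range h) with hSdef
  constructor
  · -- Gaussianity
    intro n t c
    have hclos : ∀ Y : Lp ℝ 2 P, Y ∈ closure (S : Set (Lp ℝ 2 P)) →
        ∃ v : NNReal, P.map ⇑Y = gaussianReal 0 v := by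
      intro Y hY
      haveI : FrechetUrysohnSpace (Lp ℝ 2 P) :=
        FirstCountableTopology.frechetUrysohnSpace
      obtain ⟨u, hu_mem, hu_tend⟩ := mem_closure_iff_seq_limit.mp hY
      exact limit_gaussian u Y hu_tend fun m => span_gaussian h hGP _ (hu_mem m)
    set F : X ⊕ X × Z → Lp ℝ 2 P := Sum.elim f g with hFdef
    have hiff : ∀ y : Lp ℝ 2 P, y ∈ S.topologicalClosure ↔ y ∈ closure (S : Set (Lp ℝ 2 P)) :=
      fun y => by rw [← SetLike.mem_coe, Submodule.topologicalClosure_coe]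
    have hmemT : ∀ s, F s ∈ S.topologicalClosure := by
      intro s
      rw [hiff]
      cases s with
      | inl x =>
        show f x ∈ _
        rw [hf x]
        exact integral_mem_closure_submodule PW _ (hintPW x) S
          (fun w => Submodule.subset_span ⟨(x, w), rfl⟩)
      | inr p =>
        obtain ⟨x, z⟩ := p
        show g (x, z) ∈ _
        haveI := hfin (x, z)
        rw [hg x z]
        exact integral_mem_closure_submodule (ν (x, z)) _ (hint x z) S
          (fun w => Submodule.subset_span ⟨(x, w), rfl⟩)
    have hYmem : (∑ i, c i • F (t i)) ∈ S.topologicalClosure :=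
      Submodule.sum_mem _ fun i _ => Submodule.smul_mem _ _ (hmemT (t i))
    rw [hiff] at hYmem
    obtain ⟨v, hv⟩ := hclos _ hYmem
    refine ⟨v, ?_⟩
    rw [← hv]
    apply Measure.map_congr
    have helim : ∀ s, Sum.elim (fun x => ⇑(f x)) (fun p => ⇑(g p)) s = ⇑(F s) := by
      rintro (x | p) <;> rfl
    have hae := lp_coeFn_comb c fun i => F (t i)
    filter_upwards [hae] with ω hω
    rw [hω]
    exact Finset.sum_congr rfl fun i _ => by rw [helim (t i)]
  · -- covariance
    intro x' x z
    haveI := hfin (x, z)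
    -- products of elements of the process are integrable
    have hint2 : ∀ p q : X × W, Integrable (fun ω => h p ω * h q ω) P := by
      intro p q
      have := L2.integrable_inner (𝕜 := ℝ) (h p) (h q)
      simpa [RCLike.inner_apply, conj_trivial, mul_comm] using this
    have hsqzero : ∀ q : X × W, (∫ ω, h q ω * h q ω ∂P) = 0 → (⇑(h q) =ᵐ[P] 0) := by
      intro q hq
      have := (integral_eq_zero_iff_of_nonneg (fun ω => mul_self_nonneg (h q ω))
        (hint2 q q)).mp hq
      filter_upwards [this] with ω hω
      exact mul_self_eq_zero.mp hω
    -- key covariance identity with crossed arguments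
    have key : ∀ w w', (∫ ω, h (x', w') ω * h (x, w) ω ∂P) = kX x x' * kW w' w := by
      intro w w'
      by_cases hxx : kX x' x = kX x x'
      · rw [hcov x' x w' w, hxx]
      · have hdiag : ∀ u : W, kW u u = 0 := by
          intro u
          have h1 := hcov x x' u u
          have h2 := hcov x' x u u
          have h3 : (∫ ω, h (x, u) ω * h (x', u) ω ∂P)
              = ∫ ω, h (x', u) ω * h (x, u) ω ∂P := by
            refine integral_congr_ae (Eventually.of_forall fun ω => ?_)
            ring
          rw [h1, h2] at h3
          have h4 : (kX x x' - kX x' x) * kW u u = 0 := by linarith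
          rcases mul_eq_zero.mp h4 with h5 | h5
          · exact absurd (by linarith : kX x' x = kX x x') hxx
          · exact h5
        have hzero : ∀ q : X × W, (⇑(h q) =ᵐ[P] 0) := by
          rintro ⟨y, u⟩
          apply hsqzero
          have := hcov y y u u
          rw [hdiag u, mul_zero] at this
          exact this
        have hL : (∫ ω, h (x', w') ω * h (x, w) ω ∂P) = 0 := by
          have hae0 : (fun ω => h (x', w') ω * h (x, w) ω) =ᵐ[P] (fun _ => (0:ℝ)) := by
            filter_upwards [hzero (x', w')] with ω hω
            rw [Pi.zero_apply] at hω
            rw [hω, zero_mul]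
          rw [integral_congr_ae hae0, integral_zero]
        have hR : kX x x' * kW w' w = 0 := by
          rw [← hcov x x' w' w]
          have hae0 : (fun ω => h (x, w') ω * h (x', w) ω) =ᵐ[P] (fun _ => (0:ℝ)) := by
            filter_upwards [hzero (x, w')] with ω hω
            rw [Pi.zero_apply] at hω
            rw [hω, zero_mul]
          rw [integral_congr_ae hae0, integral_zero]
        rw [hL, hR]
    -- now compute the covariance via inner products in L²
    have hinner_eq : ∀ u w : Lp ℝ 2 P, (inner ℝ u w) = ∫ ω, u ω * w ω ∂P := by
      intro u w
      rw [L2.inner_def]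
      refine integral_congr_ae (Eventually.of_forall fun ω => ?_)
      simp [RCLike.inner_apply, conj_trivial, mul_comm]
    calc (∫ ω, f x' ω * g (x, z) ω ∂P) = (inner ℝ (f x') (g (x, z))) :=
          (hinner_eq _ _).symm
      _ = ∫ w, (inner ℝ (f x') (h (x, w))) ∂(ν (x, z)) := by
          rw [hg x z, ← integral_inner (hint x z) (f x')]
      _ = ∫ w, (∫ w', (inner ℝ (h (x', w')) (h (x, w))) ∂PW) ∂(ν (x, z)) := by
          refine integral_congr_ae (Eventually.of_forall fun w => ?_)
          simp only
          rw [real_inner_comm, hf x', ← integral_inner (hintPW x') (h (x, w))]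
          refine integral_congr_ae (Eventually.of_forall fun w' => ?_)
          simp only
          rw [real_inner_comm]
      _ = ∫ w, (∫ w', kX x x' * kW w' w ∂PW) ∂(ν (x, z)) := by
          refine integral_congr_ae (Eventually.of_forall fun w => ?_)
          simp only
          refine integral_congr_ae (Eventually.of_forall fun w' => ?_)
          simp only
          rw [hinner_eq, key w w']
      _ = kX x x' * ∫ w, (∫ w', kW w' w ∂PW) ∂(ν (x, z)) := by
          simp_rw [integral_const_mul]
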